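/- Let n ≥ 1 and let B ⊆ ℝⁿ be a set belonging to the Boolean algebra of subsets of ℝⁿ generated by the half-spaces { x ∈ ℝⁿ : k₁x₁ + ⋯ + kₙxₙ ≥ 0 } with k₁, …, kₙ ∈ ℤ (i.e. B is a finite Boolean combination of such sets). Let Q be a polynomial in n variables with rational coefficients. If Q(x) = 0 for every point x ∈ B with all coordinates rational, then Q(x) = 0 for every point x ∈ B. -/

import Mathlib

/-- Membership in the Boolean algebra of subsets of `ℝⁿ` generated by the half-spaces
`{ x : k₁x₁ + ⋯ + kₙxₙ ≥ 0 }` with integer coefficients `kᵢ`: the finite Boolean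
combinations of such half-spaces. -/
inductive IsIntLinearBooleanComb (n : ℕ) : Set (Fin n → ℝ) → Prop
  | halfspace (k : Fin n → ℤ) :
      IsIntLinearBooleanComb n { x : Fin n → ℝ | 0 ≤ ∑ i, (k i : ℝ) * x i }
  | compl {s : Set (Fin n → ℝ)} :
      IsIntLinearBooleanComb n s → IsIntLinearBooleanComb n sᶜ
  | union {s t : Set (Fin n → ℝ)} :
      IsIntLinearBooleanComb n s → IsIntLinearBooleanComb n t →
        IsIntLinearBooleanComb n (s ∪ t)

private lemma sum_sq_expand {F : Type*} [Field F] [LinearOrder F] [IsStrictOrderedRing F] {ι m : Type*}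
    [Fintype ι] [Fintype m] (c : ι → F) (w : ι → m → F) :
    ∑ i, (∑ j, c j * w j i) ^ 2 = ∑ j, ∑ k, c j * c k * ∑ i, w j i * w k i := by
  simp only [sq, Finset.sum_mul_sum]
  rw [Finset.sum_comm]
  refine Finset.sum_congr rfl fun j _ => ?_
  rw [Finset.sum_comm]
  refine Finset.sum_congr rfl fun k _ => ?_
  rw [Finset.mul_sum]
  exact Finset.sum_congr rfl fun i _ => by ring

private lemma ratCast_linearIndependent {ι m : Type*} [Fintype ι] [Fintype m]
    {v : ι → m → ℚ} (hv : LinearIndependent ℚ v) :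
    LinearIndependent ℝ (fun j (i : m) => ((v j i : ℚ) : ℝ)) := by
  classical
  set G : Matrix ι ι ℚ := Matrix.of fun j k => ∑ i, v j i * v k i with hG
  have hdet : G.det ≠ 0 := by
    intro h
    obtain ⟨c, hc0, hc⟩ := (Matrix.exists_mulVec_eq_zero_iff).2 h
    have hmv : ∀ j, ∑ k, G j k * c k = 0 := by
      intro j
      have := congrFun hc j
      simpa [Matrix.mulVec, dotProduct] using this
    have hsum : ∑ i, (∑ j, c j * v j i) ^ 2 = 0 := by
      rw [sum_sq_expand]
      calc ∑ j, ∑ k, c j * c k * ∑ i, v j i * v k i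
          = ∑ j, c j * ∑ k, G j k * c k := by
            refine Finset.sum_congr rfl fun j _ => ?_
            rw [Finset.mul_sum]
            refine Finset.sum_congr rfl fun k _ => ?_
            simp only [hG, Matrix.of_apply]
            ring
        _ = 0 := by simp [hmv]
    have hz : ∀ i, ∑ j, c j * v j i = 0 := fun i =>
      pow_eq_zero_iff two_ne_zero |>.1
        ((Finset.sum_eq_zero_iff_of_nonneg (fun i _ => sq_nonneg _)).1 hsum i
          (Finset.mem_univ i))
    refine hc0 (funext fun j => Fintype.linearIndependent_iff.1 hv c ?_ j)
    funext i
    simpa [Finset.sum_apply] using hz i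
  rw [Fintype.linearIndependent_iff]
  intro r hr j
  set Gc : Matrix ι ι ℝ := G.map (fun q : ℚ => (q : ℝ)) with hGc
  have h1 : ∀ i, ∑ l, r l * (v l i : ℝ) = 0 := fun i => by
    simpa [Finset.sum_apply] using congrFun hr i
  have hGr : Gc.mulVec r = 0 := by
    funext a
    have key : ∑ l, (∑ i, (v a i : ℝ) * (v l i : ℝ)) * r l
        = ∑ i, (v a i : ℝ) * ∑ l, r l * (v l i : ℝ) := by
      simp only [Finset.sum_mul, Finset.mul_sum]
      rw [Finset.sum_comm]
      exact Finset.sum_congr rfl fun i _ =>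
        Finset.sum_congr rfl fun l _ => by ring
    have : Gc.mulVec r a = ∑ l, (∑ i, (v a i : ℝ) * (v l i : ℝ)) * r l := by
      simp [hGc, Matrix.mulVec, dotProduct, hG, Matrix.map_apply, Matrix.of_apply]
    rw [Pi.zero_apply, this, key]
    simp [h1]
  have hdetR : Gc.det ≠ 0 := by
    have : Gc.det = ((G.det : ℚ) : ℝ) := by
      rw [show Gc = (Rat.castHom ℝ).mapMatrix G from rfl, ← RingHom.map_det]
      rfl
    rw [this]
    exact_mod_cast hdet
  have hinj := Matrix.mulVec_injective_iff_isUnit.2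
    ((Matrix.isUnit_iff_isUnit_det _).2 (isUnit_iff_ne_zero.2 hdetR))
  have := hinj (show Gc.mulVec r = Gc.mulVec 0 by rw [hGr, Matrix.mulVec_zero])
  exact congrFun this j

private lemma dense_rat_solutions {n : ℕ} {κ : Type*} [Fintype κ] (k : κ → Fin n → ℚ)
    (x : Fin n → ℝ) (hx : ∀ c, ∑ i, (k c i : ℝ) * x i = 0) :
    x ∈ closure {y : Fin n → ℝ |
      (∀ c, ∑ i, (k c i : ℝ) * y i = 0) ∧ ∀ i, ∃ q : ℚ, y i = (q : ℝ)} := by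
  classical
  let φQ : (Fin n → ℚ) →ₗ[ℚ] (κ → ℚ) :=
    { toFun := fun y c => ∑ i, k c i * y i
      map_add' := fun y z => by
        funext c; simp [mul_add, Finset.sum_add_distrib]
      map_smul' := fun a y => by
        funext c
        simp only [Pi.smul_apply, smul_eq_mul, RingHom.id_apply, Finset.mul_sum]
        exact Finset.sum_congr rfl fun i _ => by ring }
  let φR : (Fin n → ℝ) →ₗ[ℝ] (κ → ℝ) :=
    { toFun := fun y c => ∑ i, (k c i : ℝ) * y i
      map_add' := fun y z => by
        funext c; simp [mul_add, Finset.sum_add_distrib]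
      map_smul' := fun a y => by
        funext c
        simp only [Pi.smul_apply, smul_eq_mul, RingHom.id_apply, Finset.mul_sum]
        exact Finset.sum_congr rfl fun i _ => by ring }
  set K := LinearMap.ker φQ with hK
  set d := Module.finrank ℚ K with hd
  let b : Module.Basis (Fin d) ℚ K := Module.finBasis ℚ K
  set v : Fin d → Fin n → ℚ := fun j => ((b j : K) : Fin n → ℚ) with hv_def
  have hv : LinearIndependent ℚ v := b.linearIndependent.map' K.subtype K.ker_subtype
  set vb : Fin d → Fin n → ℝ := fun j i => (v j i : ℝ) with hvb_def
  have hvb : LinearIndependent ℝ vb := ratCast_linearIndependent hv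
  set U : Submodule ℝ (Fin n → ℝ) := Submodule.span ℝ (Set.range vb) with hU_def
  have hUrank : Module.finrank ℝ U = d := by
    rw [finrank_span_eq_card hvb, Fintype.card_fin]
  have hφv : ∀ j, φR (vb j) = 0 := by
    intro j
    have hbj : φQ (v j) = 0 := (b j).2
    funext c
    have := congrFun hbj c
    simp only [φQ, LinearMap.coe_mk, AddHom.coe_mk] at this
    simp only [φR, LinearMap.coe_mk, AddHom.coe_mk, Pi.zero_apply, hvb_def]
    exact_mod_cast congrArg (fun q : ℚ => (q : ℝ)) this
  have hUker : U ≤ LinearMap.ker φR := by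
    rw [hU_def, Submodule.span_le]
    rintro _ ⟨j, rfl⟩
    exact LinearMap.mem_ker.2 (hφv j)
  -- rank comparison
  set r := Module.finrank ℚ (LinearMap.range φQ) with hr_def
  have hQrn : r + d = n := by
    have := LinearMap.finrank_range_add_finrank_ker φQ
    rwa [Module.finrank_pi ℚ, Fintype.card_fin] at this
  let w : Module.Basis (Fin r) ℚ (LinearMap.range φQ) := Module.finBasis ℚ _
  have hw : LinearIndependent ℚ (fun s => ((w s : LinearMap.range φQ) : κ → ℚ)) :=
    w.linearIndependent.map' (LinearMap.range φQ).subtype (Submodule.ker_subtype _)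
  have hwR : LinearIndependent ℝ (fun s (c : κ) => (((w s : LinearMap.range φQ) : κ → ℚ) c : ℝ)) :=
    ratCast_linearIndependent hw
  have hmemR : ∀ s, (fun c : κ => (((w s : LinearMap.range φQ) : κ → ℚ) c : ℝ))
      ∈ LinearMap.range φR := by
    intro s
    obtain ⟨p, hp⟩ := (w s).2
    refine ⟨fun i => (p i : ℝ), ?_⟩
    funext c
    have := congrFun hp c
    simp only [φQ, LinearMap.coe_mk, AddHom.coe_mk] at this
    simp only [φR, LinearMap.coe_mk, AddHom.coe_mk]
    rw [← this]
    push_cast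
    rfl
  have hrle : r ≤ Module.finrank ℝ (LinearMap.range φR) := by
    have h1 : Submodule.span ℝ (Set.range fun s (c : κ) =>
        (((w s : LinearMap.range φQ) : κ → ℚ) c : ℝ)) ≤ LinearMap.range φR := by
      rw [Submodule.span_le]
      rintro _ ⟨s, rfl⟩
      exact hmemR s
    have h2 := Submodule.finrank_mono h1
    rwa [finrank_span_eq_card hwR, Fintype.card_fin] at h2
  have hRrn : Module.finrank ℝ (LinearMap.range φR) + Module.finrank ℝ (LinearMap.ker φR) = n := by
    have := LinearMap.finrank_range_add_finrank_ker φR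
    rwa [Module.finrank_pi ℝ, Fintype.card_fin] at this
  have hkerle : Module.finrank ℝ (LinearMap.ker φR) ≤ d := by omega
  have hUeq : U = LinearMap.ker φR :=
    Submodule.eq_of_le_of_finrank_le hUker (by rw [hUrank]; exact hkerle)
  -- x is in the span
  have hxker : x ∈ LinearMap.ker φR := by
    rw [LinearMap.mem_ker]
    funext c
    exact hx c
  rw [← hUeq, hU_def] at hxker
  obtain ⟨t0, ht0⟩ := (Submodule.mem_span_range_iff_exists_fun ℝ).1 hxker
  -- approximate
  let F : (Fin d → ℝ) → (Fin n → ℝ) := fun t => ∑ j, t j • vb j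
  have hFcont : Continuous F := by
    refine continuous_finset_sum _ fun j _ => ?_
    exact (continuous_apply j).smul continuous_const
  have hDdense : Dense {t : Fin d → ℝ | ∀ j, ∃ q : ℚ, t j = (q : ℝ)} := by
    intro t
    rw [Metric.mem_closure_iff]
    intro ε hε
    choose q hq using fun j : Fin d => exists_rat_near (t j) hε
    refine ⟨fun j => (q j : ℝ), fun j => ⟨q j, rfl⟩, ?_⟩
    rw [dist_pi_lt_iff hε]
    intro j
    rw [Real.dist_eq]
    exact hq j
  have himg : F '' {t : Fin d → ℝ | ∀ j, ∃ q : ℚ, t j = (q : ℝ)} ⊆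
      {y : Fin n → ℝ | (∀ c, ∑ i, (k c i : ℝ) * y i = 0) ∧ ∀ i, ∃ q : ℚ, y i = (q : ℝ)} := by
    rintro _ ⟨t, ht, rfl⟩
    constructor
    · have hFU : F t ∈ U := by
        refine Submodule.sum_mem _ fun j _ => ?_
        exact Submodule.smul_mem _ _ (Submodule.subset_span ⟨j, rfl⟩)
      have := hUker hFU
      rw [LinearMap.mem_ker] at this
      intro c
      have h0 := congrFun this c
      simpa only [φR, LinearMap.coe_mk, AddHom.coe_mk, Pi.zero_apply] using h0
    · intro i
      choose q hq using ht
      refine ⟨∑ j, q j * v j i, ?_⟩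
      push_cast
      simp only [F, Finset.sum_apply, Pi.smul_apply, smul_eq_mul, hvb_def]
      exact Finset.sum_congr rfl fun j _ => by rw [hq j]
  have hxcl : x ∈ closure (F '' {t : Fin d → ℝ | ∀ j, ∃ q : ℚ, t j = (q : ℝ)}) := by
    have hxF : x = F t0 := ht0.symm
    rw [hxF]
    refine image_closure_subset_closure_image hFcont ?_
    exact ⟨t0, by rw [hDdense.closure_eq]; trivial, rfl⟩
  exact closure_mono himg hxcl

private lemma exists_determining_forms {n : ℕ} {B : Set (Fin n → ℝ)}
    (hB : IsIntLinearBooleanComb n B) :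
    ∃ L : Finset (Fin n → ℤ), ∀ y z : Fin n → ℝ,
      (∀ k ∈ L, (0 ≤ ∑ i, (k i : ℝ) * y i ↔ 0 ≤ ∑ i, (k i : ℝ) * z i)) →
        (y ∈ B ↔ z ∈ B) := by
  induction hB with
  | halfspace k =>
      exact ⟨{k}, fun y z h => by simpa using h k (Finset.mem_singleton_self k)⟩
  | compl _ ih =>
      obtain ⟨L, hL⟩ := ih
      exact ⟨L, fun y z h => by simp only [Set.mem_compl_iff]; exact not_congr (hL y z h)⟩
  | union _ _ ih1 ih2 =>
      obtain ⟨L1, hL1⟩ := ih1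
      obtain ⟨L2, hL2⟩ := ih2
      refine ⟨L1 ∪ L2, fun y z h => ?_⟩
      have h1 := hL1 y z fun k hk => h k (Finset.mem_union_left _ hk)
      have h2 := hL2 y z fun k hk => h k (Finset.mem_union_right _ hk)
      simp only [Set.mem_union]
      exact or_congr h1 h2

/-- If a polynomial `Q` with rational coefficients vanishes at every rational point of a set
`B ⊆ ℝⁿ` that is a finite Boolean combination of integer-coefficient half-spaces, then `Q`
vanishes on all of `B`. -/
theorem mvPolynomial_eq_zero_of_eq_zero_on_rat_points
    (n : ℕ) (hn : 0 < n) (B : Set (Fin n → ℝ)) (hB : IsIntLinearBooleanComb n B)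
    (Q : MvPolynomial (Fin n) ℚ)
    (hQ : ∀ x ∈ B, (∀ i, ∃ q : ℚ, x i = (q : ℝ)) → MvPolynomial.aeval x Q = 0) :
    ∀ x ∈ B, MvPolynomial.aeval x Q = 0 := by
  classical
  obtain ⟨L, hL⟩ := exists_determining_forms hB
  intro x hx
  set ℓ : (Fin n → ℤ) → (Fin n → ℝ) → ℝ := fun k y => ∑ i, (k i : ℝ) * y i with hℓ
  set L₀ : Finset (Fin n → ℤ) := L.filter (fun k => ℓ k x = 0) with hL₀
  let κ := {k // k ∈ L₀}
  let kf : κ → Fin n → ℚ := fun c i => ((c.1 i : ℤ) : ℚ)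
  have hcast : ∀ (c : κ) (y : Fin n → ℝ), ∑ i, (kf c i : ℝ) * y i = ℓ c.1 y := by
    intro c y
    refine Finset.sum_congr rfl fun i _ => ?_
    push_cast
    rfl
  have hx0 : ∀ c : κ, ∑ i, (kf c i : ℝ) * x i = 0 := by
    intro c
    rw [hcast]
    exact (Finset.mem_filter.1 c.2).2
  have hclos := dense_rat_solutions kf x hx0
  set S : Set (Fin n → ℝ) := {y : Fin n → ℝ |
      (∀ c, ∑ i, (kf c i : ℝ) * y i = 0) ∧ ∀ i, ∃ q : ℚ, y i = (q : ℝ)} with hS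
  set O : Set (Fin n → ℝ) :=
    {y | ∀ k ∈ L, (0 < ℓ k x → 0 < ℓ k y) ∧ (ℓ k x < 0 → ℓ k y < 0)} with hO_def
  have hℓcont : ∀ k : Fin n → ℤ, Continuous (ℓ k) := fun k =>
    continuous_finset_sum _ fun i _ => continuous_const.mul (continuous_apply i)
  have hO : IsOpen O := by
    have : O = ⋂ k ∈ L, ({y | 0 < ℓ k x → 0 < ℓ k y} ∩ {y | ℓ k x < 0 → ℓ k y < 0}) := by
      ext y
      simp [hO_def, Set.mem_iInter]
    rw [this]
    refine isOpen_biInter_finset fun k _ => IsOpen.inter ?_ ?_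
    · by_cases h : 0 < ℓ k x
      · have : {y | 0 < ℓ k x → 0 < ℓ k y} = {y | 0 < ℓ k y} := by ext y; simp [h]
        rw [this]
        exact isOpen_lt continuous_const (hℓcont k)
      · have : {y | 0 < ℓ k x → 0 < ℓ k y} = Set.univ := by ext y; simp [h]
        rw [this]; exact isOpen_univ
    · by_cases h : ℓ k x < 0
      · have : {y | ℓ k x < 0 → ℓ k y < 0} = {y | ℓ k y < 0} := by ext y; simp [h]
        rw [this]
        exact isOpen_lt (hℓcont k) continuous_const
      · have : {y | ℓ k x < 0 → ℓ k y < 0} = Set.univ := by ext y; simp [h]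
        rw [this]; exact isOpen_univ
  have hxO : x ∈ O := fun k _ => ⟨fun h => h, fun h => h⟩
  have hOS : ∀ y ∈ O ∩ S, y ∈ B ∧ ∀ i, ∃ q : ℚ, y i = (q : ℝ) := by
    rintro y ⟨hyO, hker, hrat⟩
    refine ⟨?_, hrat⟩
    refine (hL y x fun k hk => ?_).2 hx
    rcases lt_trichotomy (ℓ k x) 0 with hneg | hzero | hpos
    · have : ℓ k y < 0 := (hyO k hk).2 hneg
      constructor
      · intro h; exact absurd h (not_le.2 this)
      · intro h; exact absurd h (not_le.2 hneg)
    · have hkL₀ : k ∈ L₀ := Finset.mem_filter.2 ⟨hk, hzero⟩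
      have : ℓ k y = 0 := by
        rw [← hcast ⟨k, hkL₀⟩ y]
        exact hker ⟨k, hkL₀⟩
      show 0 ≤ ℓ k y ↔ 0 ≤ ℓ k x
      rw [this, hzero]
    · have : 0 < ℓ k y := (hyO k hk).1 hpos
      exact ⟨fun _ => le_of_lt hpos, fun _ => le_of_lt this⟩
  have hxcl : x ∈ closure (O ∩ S) := IsOpen.inter_closure hO ⟨hxO, hclos⟩
  have hQcont : Continuous fun y : Fin n → ℝ => MvPolynomial.aeval y Q := by
    have : (fun y : Fin n → ℝ => MvPolynomial.aeval y Q)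
        = fun y => MvPolynomial.eval y (MvPolynomial.map (algebraMap ℚ ℝ) Q) := by
      funext y
      rw [MvPolynomial.aeval_def, MvPolynomial.eval_map]
    rw [this]
    exact MvPolynomial.continuous_eval _
  have hsub : closure (O ∩ S) ⊆ {y | MvPolynomial.aeval y Q = 0} := by
    refine closure_minimal (fun y hy => ?_) (isClosed_eq hQcont continuous_const)
    obtain ⟨hyB, hyrat⟩ := hOS y hy
    exact hQ y hyB hyrat
  exact hsub hxcl
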